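/- Let n ≥ 2. For every permutation p of {1,…,n}, the entry p_{n−1} is not a leaf of the minmax tree T^m_p. -/

import Mathlib

/-- Binary trees with natural-number labels, used to model minmax trees of
permutations. -/
inductive BTree where
  | nil : BTree
  | node : ℕ → BTree → BTree → BTree
deriving DecidableEq, Repr

namespace BTree

/-- The label of the root (if any). -/
def rootVal : BTree → Option ℕ
  | .nil => none
  | .node v _ _ => some v

/-- Whether the value `x` occurs as a label in the tree. -/
def memB : BTree → ℕ → Bool
  | .nil, _ => false
  | .node v l r, x => (x == v) || memB l x || memB r x

/-- The number of children of the (unique, for permutations) node labelled `x`. -/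
def numChildren : BTree → ℕ → ℕ
  | .nil, _ => 0
  | .node v l r, x =>
      if x = v then (if l = .nil then 0 else 1) + (if r = .nil then 0 else 1)
      else numChildren l x + numChildren r x

/-- `x` is a leaf of the tree: it occurs in the tree and has no children. -/
def IsLeaf (t : BTree) (x : ℕ) : Prop := t.memB x = true ∧ t.numChildren x = 0

instance (t : BTree) (x : ℕ) : Decidable (t.IsLeaf x) := by unfold IsLeaf; infer_instance

/-- `childB t x y = true` iff `x` is a child of `y` in `t`, i.e. `x` is the root of
the left or the right subtree hanging from `y`. -/
def childB : BTree → ℕ → ℕ → Bool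
  | .nil, _, _ => false
  | .node v l r, x, y =>
      ((y == v) && (l.rootVal == some x || r.rootVal == some x))
      || childB l x y || childB r x y

/-- `ancB t x y = true` iff `x` is a (strict) ancestor of `y` in `t`, i.e. `y` lies
in a subtree hanging from `x`. -/
def ancB : BTree → ℕ → ℕ → Bool
  | .nil, _, _ => false
  | .node v l r, x, y =>
      ((x == v) && (memB l y || memB r y)) || ancB l x y || ancB r x y

end BTree

/-- `x` is the leftmost-eligible extreme letter of `l`: the minimum or the maximum. -/
def isExtreme (l : List ℕ) (x : ℕ) : Bool :=
  (l.min? == some x) || (l.max? == some x)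

/-- Fuelled construction of the minmax tree of a list of distinct naturals:
split the list as `u ++ [m] ++ v` where `m` is the leftmost of the minimum and
maximum letters, put `m` at the root and recurse on `u` (left) and `v` (right). -/
def mmAux : ℕ → List ℕ → BTree
  | 0, _ => .nil
  | fuel+1, l =>
    if l.isEmpty then .nil
    else
      let k := l.findIdx (isExtreme l)
      .node (l.getD k 0) (mmAux fuel (l.take k)) (mmAux fuel (l.drop (k+1)))

/-- The minmax tree `T^m_p` of a word `l` (with distinct letters). -/
def minmaxTree (l : List ℕ) : BTree := mmAux l.length l

/-- The word `p_1 p_2 … p_n` on the letters `{1,…,n}` associated to a permutation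
`p` of `Fin n`. -/
def permList (n : ℕ) (p : Equiv.Perm (Fin n)) : List ℕ :=
  List.ofFn (fun i => (p i : ℕ) + 1)

/-- The `i`-th entry `p_i` (1-indexed) of the permutation `p`. -/
def entryAt (n : ℕ) (p : Equiv.Perm (Fin n)) (i : ℕ) : ℕ :=
  (permList n p).getD (i - 1) 0

lemma mmAux_ne_nil (fuel : ℕ) (l : List ℕ) (h1 : l ≠ []) (h2 : 1 ≤ fuel) :
    mmAux fuel l ≠ .nil := by
  cases fuel with
  | zero => omega
  | succ f => simp [mmAux, h1]

lemma min_exists (l : List ℕ) (h : l ≠ []) :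
    ∃ m, l.min? = some m ∧ m ∈ l ∧ ∀ b ∈ l, m ≤ b := by
  obtain ⟨m, hm⟩ := Option.ne_none_iff_exists'.mp (fun h2 => h (List.min?_eq_none_iff.mp h2))
  exact ⟨m, hm, List.min?_eq_some_iff.mp hm⟩

lemma max_exists (l : List ℕ) (h : l ≠ []) :
    ∃ m, l.max? = some m ∧ m ∈ l ∧ ∀ b ∈ l, b ≤ m := by
  obtain ⟨m, hm⟩ := Option.ne_none_iff_exists'.mp (fun h2 => h (List.max?_eq_none_iff.mp h2))
  exact ⟨m, hm, List.max?_eq_some_iff.mp hm⟩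

lemma getD_drop (l : List ℕ) (nn i : ℕ) (h : nn + i < l.length) :
    (l.drop nn).getD i 0 = l.getD (nn + i) 0 := by
  rw [List.getD_eq_getElem _ _ (by simp; omega), List.getD_eq_getElem _ _ h,
    List.getElem_drop]

lemma key_lemma (fuel : ℕ) : ∀ l : List ℕ, 2 ≤ l.length → l.length ≤ fuel →
    (mmAux fuel l).numChildren (l.getD (l.length - 2) 0) ≠ 0 := by
  induction fuel with
  | zero => intro l h1 h2; omega
  | succ f ih =>
    intro l h1 h2
    have hne : l ≠ [] := by intro h; simp [h] at h1
    obtain ⟨m, hm, hmmem, hmle⟩ := min_exists l hne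
    obtain ⟨M, hM, hMmem, hMle⟩ := max_exists l hne
    obtain ⟨j1, hj1lt, hj1⟩ := List.mem_iff_getElem.mp hmmem
    obtain ⟨j2, hj2lt, hj2⟩ := List.mem_iff_getElem.mp hMmem
    -- there is an extreme entry at index < l.length - 1
    have hex : ∃ j, ∃ hj : j < l.length, j < l.length - 1 ∧ isExtreme l (l[j]'hj) = true := by
      by_cases h1lt : j1 < l.length - 1
      · exact ⟨j1, hj1lt, h1lt, by simp [isExtreme, hm, hj1]⟩
      · by_cases h2lt : j2 < l.length - 1
        · exact ⟨j2, hj2lt, h2lt, by simp [isExtreme, hM, hj2]⟩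
        · -- j1 = j2 = l.length - 1, so m = M and l[0] = m
          have hj1e : j1 = l.length - 1 := by omega
          have hj2e : j2 = l.length - 1 := by omega
          have hmM : m = M := by rw [← hj1, ← hj2]; congr 1; omega
          have h0 : l[0]'(by omega) = m := by
            have h1' := hmle (l[0]'(by omega)) (List.getElem_mem _)
            have h2' := hMle (l[0]'(by omega)) (List.getElem_mem _)
            omega
          exact ⟨0, by omega, by omega, by simp [isExtreme, hm, h0]⟩
    obtain ⟨j, hjlt, hjlt1, hjext⟩ := hex
    set k := l.findIdx (isExtreme l) with hkdef
    have hkle : k ≤ j := by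
      by_contra hc
      have := List.not_of_lt_findIdx (p := isExtreme l) (xs := l) (i := j) (by omega)
      rw [hjext] at this; exact Bool.false_ne_true this.symm
    have hklt : k < l.length - 1 := by omega
    have ht : mmAux (f+1) l =
        .node (l.getD k 0) (mmAux f (l.take k)) (mmAux f (l.drop (k+1))) := by
      simp only [mmAux, ← hkdef]
      rw [if_neg (by simp [hne])]
    have hRlist : l.drop (k+1) ≠ [] := by
      intro h
      have := congrArg List.length h
      simp at this; omega
    have hR : mmAux f (l.drop (k+1)) ≠ .nil := mmAux_ne_nil f _ hRlist (by omega)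
    rw [ht]
    by_cases hxv : l.getD (l.length - 2) 0 = l.getD k 0
    · simp only [BTree.numChildren, if_pos hxv, if_neg hR]
      omega
    · simp only [BTree.numChildren, if_neg hxv]
      have hk2 : k < l.length - 2 := by
        rcases Nat.lt_or_ge k (l.length - 2) with h | h
        · exact h
        · exfalso; apply hxv; congr 1; omega
      have hdlen : (l.drop (k+1)).length = l.length - (k+1) := by simp
      have hIH := ih (l.drop (k+1)) (by omega) (by omega)
      have heq : (l.drop (k+1)).getD ((l.drop (k+1)).length - 2) 0
          = l.getD (l.length - 2) 0 := by
        rw [getD_drop l (k+1) _ (by omega)]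
        congr 1
        omega
      rw [heq] at hIH
      omega

/-- For `n ≥ 2`, in every permutation `p` of `{1,…,n}` the entry
`p_{n-1}` is not a leaf of the minmax tree. -/
theorem penultimate_entry_not_leaf (n : ℕ) (hn : 2 ≤ n) (p : Equiv.Perm (Fin n)) :
    ¬ (minmaxTree (permList n p)).IsLeaf (entryAt n p (n - 1)) := by
  intro hleaf
  have hlen : (permList n p).length = n := by simp [permList]
  have h := key_lemma n (permList n p) (by omega) (by omega)
  rw [hlen] at h
  have hx : entryAt n p (n - 1) = (permList n p).getD (n - 2) 0 := by
    unfold entryAt; congr 1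
  rw [minmaxTree, hlen] at hleaf
  rw [hx] at hleaf
  exact h hleaf.2
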